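/- Let d be a positive integer and K, L, Γ, ζ > 0. There exist constants C > 0 and r > 0, depending only on d, K, L, Γ, ζ, with the following property. Suppose f, g : ℝ^d → ℝ are twice continuously differentiable on the open ball B(μ*, 3r) around a point μ* ∈ ℝ^d and satisfy on this ball: ‖∇²f(x)‖ ≤ Γ, ‖∇²g(x)‖ ≤ Γ, and both ∇²f and ∇²g are L-Lipschitz in the operator norm. Suppose further that μ⁻, μ, μ⁺ are points of the closed ball B̄(μ*, r) such that: ∇f(μ*) = 0; ∇g(μ) = ∇f(μ); ∇g(μ⁺) = 0; ∇²f(μ) and ∇²g(μ) are invertible with ‖(∇²f(μ))⁻¹‖ ≤ K and ‖(∇²g(μ))⁻¹‖ ≤ K; and ‖∇²f(μ) − ∇²g(μ)‖ ≤ ζ ‖μ − μ⁻‖. Then ‖μ⁺ − μ*‖ ≤ C ‖μ − μ*‖ · max{‖μ − μ*‖, ‖μ⁻ − μ*‖}. -/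

import Mathlib

set_option maxHeartbeats 1000000

open Metric

lemma grad_diffAt' {d : ℕ} (f : EuclideanSpace ℝ (Fin d) → ℝ) {s : Set (EuclideanSpace ℝ (Fin d))}
    (hs : IsOpen s) (hf : ContDiffOn ℝ 2 f s) {x : EuclideanSpace ℝ (Fin d)} (hx : x ∈ s) :
    DifferentiableAt ℝ (gradient f) x := by
  have h2 : ContDiffOn ℝ ((1 : WithTop ℕ∞) + 1) f s := by
    rw [one_add_one_eq_two]; exact hf
  rw [contDiffOn_succ_iff_fderiv_of_isOpen hs] at h2
  have hd : DifferentiableAt ℝ (fderiv ℝ f) x :=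
    (h2.2.2.differentiableOn one_ne_zero).differentiableAt (hs.mem_nhds hx)
  have : DifferentiableAt ℝ
      (fun y => (InnerProductSpace.toDual ℝ (EuclideanSpace ℝ (Fin d))).symm (fderiv ℝ f y)) x :=
    ((InnerProductSpace.toDual ℝ
      (EuclideanSpace ℝ (Fin d))).symm.differentiable.differentiableAt).comp x hd
  exact this

lemma quad_bound' {E : Type*} [NormedAddCommGroup E] [NormedSpace ℝ E]
    (F : E → E) (L : ℝ) (hL : 0 ≤ L) (c : E) (r : ℝ) (hr : 0 < r)
    (hdiff : ∀ z ∈ ball c (3 * r), DifferentiableAt ℝ F z)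
    (hlip : ∀ z ∈ ball c (3 * r), ∀ w ∈ ball c (3 * r),
      ‖fderiv ℝ F z - fderiv ℝ F w‖ ≤ L * ‖z - w‖)
    {x y : E} (hx : x ∈ closedBall c r) (hy : y ∈ closedBall c r) :
    ‖F y - F x - (fderiv ℝ F x) (y - x)‖ ≤ L * ‖y - x‖ * ‖y - x‖ := by
  have hsub : closedBall c r ⊆ ball c (3 * r) :=
    closedBall_subset_ball (by linarith)
  have hseg : segment ℝ x y ⊆ closedBall c r :=
    (convex_closedBall c r).segment_subset hx hy
  have hseg' : segment ℝ x y ⊆ ball c (3 * r) := hseg.trans hsub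
  have := Convex.norm_image_sub_le_of_norm_hasFDerivWithin_le'
    (f := F) (f' := fderiv ℝ F) (φ := fderiv ℝ F x) (C := L * ‖y - x‖)
    (s := segment ℝ x y)
    (fun z hz => ((hdiff z (hseg' hz)).hasFDerivAt).hasFDerivWithinAt)
    (fun z hz => ?_) (convex_segment x y) (left_mem_segment ℝ x y) (right_mem_segment ℝ x y)
  · exact this
  · have h1 : ‖fderiv ℝ F z - fderiv ℝ F x‖ ≤ L * ‖z - x‖ :=
      hlip z (hseg' hz) x (hseg' (left_mem_segment ℝ x y))
    have h2 : ‖z - x‖ ≤ ‖y - x‖ := by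
      obtain ⟨a, b, ha, hb, hab, rfl⟩ := hz
      have : a • x + b • y - x = b • (y - x) := by
        rw [smul_sub]
        rw [show a = 1 - b by linarith, sub_smul, one_smul]; abel
      rw [this, norm_smul, Real.norm_of_nonneg hb]
      nlinarith [norm_nonneg (y - x)]
    calc ‖fderiv ℝ F z - fderiv ℝ F x‖ ≤ L * ‖z - x‖ := h1
      _ ≤ L * ‖y - x‖ := by nlinarith

/-- **Quantitative core of the local superlinear convergence theorem (Theorem 3.7).**
Given `d, K, L, Γ, ζ`, there are `C > 0` and `r > 0` such that: whenever `f, g` are `C²`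
on `B(μ*, 3r)` with Hessians (`fderiv` of `gradient`) bounded by `Γ` and `L`-Lipschitz
there, `μ⁻, μ, μ⁺ ∈ B̄(μ*, r)` with `∇f(μ*) = 0`, `∇g(μ) = ∇f(μ)`, `∇g(μ⁺) = 0`, both
Hessians at `μ` invertible with inverses bounded by `K`, and
`‖∇²f(μ) − ∇²g(μ)‖ ≤ ζ‖μ − μ⁻‖`, one has
`‖μ⁺ − μ*‖ ≤ C ‖μ − μ*‖ · max(‖μ − μ*‖, ‖μ⁻ − μ*‖)`. -/
theorem stmt17 (d : ℕ) (hd : 0 < d) (K L Γ ζ : ℝ)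
    (hK : 0 < K) (hL : 0 < L) (hΓ : 0 < Γ) (hζ : 0 < ζ) :
    ∃ C > (0 : ℝ), ∃ r > (0 : ℝ),
      ∀ (f g : EuclideanSpace ℝ (Fin d) → ℝ)
        (μs μm μ μp : EuclideanSpace ℝ (Fin d)),
        ContDiffOn ℝ 2 f (ball μs (3 * r)) →
        ContDiffOn ℝ 2 g (ball μs (3 * r)) →
        (∀ x ∈ ball μs (3 * r), ‖fderiv ℝ (gradient f) x‖ ≤ Γ) →
        (∀ x ∈ ball μs (3 * r), ‖fderiv ℝ (gradient g) x‖ ≤ Γ) →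
        (∀ x ∈ ball μs (3 * r), ∀ y ∈ ball μs (3 * r),
          ‖fderiv ℝ (gradient f) x - fderiv ℝ (gradient f) y‖ ≤ L * ‖x - y‖) →
        (∀ x ∈ ball μs (3 * r), ∀ y ∈ ball μs (3 * r),
          ‖fderiv ℝ (gradient g) x - fderiv ℝ (gradient g) y‖ ≤ L * ‖x - y‖) →
        μm ∈ closedBall μs r → μ ∈ closedBall μs r → μp ∈ closedBall μs r →
        gradient f μs = 0 →
        gradient g μ = gradient f μ →
        gradient g μp = 0 →
        ∀ (Af Ag : EuclideanSpace ℝ (Fin d) ≃L[ℝ] EuclideanSpace ℝ (Fin d)),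
          (Af : EuclideanSpace ℝ (Fin d) →L[ℝ] EuclideanSpace ℝ (Fin d)) =
            fderiv ℝ (gradient f) μ →
          (Ag : EuclideanSpace ℝ (Fin d) →L[ℝ] EuclideanSpace ℝ (Fin d)) =
            fderiv ℝ (gradient g) μ →
          ‖(Af.symm : EuclideanSpace ℝ (Fin d) →L[ℝ] EuclideanSpace ℝ (Fin d))‖ ≤ K →
          ‖(Ag.symm : EuclideanSpace ℝ (Fin d) →L[ℝ] EuclideanSpace ℝ (Fin d))‖ ≤ K →
          ‖fderiv ℝ (gradient f) μ - fderiv ℝ (gradient g) μ‖ ≤ ζ * ‖μ - μm‖ →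
          ‖μp - μs‖ ≤ C * ‖μ - μs‖ * max ‖μ - μs‖ ‖μm - μs‖ := by
  refine ⟨4 * K * ζ + 6 * K * L, by positivity, (8 * K * L)⁻¹, by positivity, ?_⟩
  set r : ℝ := (8 * K * L)⁻¹ with hrdef
  have hr : 0 < r := by positivity
  intro f g μs μm μ μp hf hg hΓf hΓg hLf hLg hμm hμ hμp hgfs hgg hggp Af Ag hAf hAg hKf hKg hζμ
  have hdf : ∀ z ∈ ball μs (3 * r), DifferentiableAt ℝ (gradient f) z :=
    fun z hz => grad_diffAt' f isOpen_ball hf hz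
  have hdg : ∀ z ∈ ball μs (3 * r), DifferentiableAt ℝ (gradient g) z :=
    fun z hz => grad_diffAt' g isOpen_ball hg hz
  have hμs : μs ∈ closedBall μs r := mem_closedBall_self hr.le
  -- error terms
  set e1 := gradient g μp - gradient g μ - (fderiv ℝ (gradient g) μ) (μp - μ) with he1def
  set e2 := gradient f μs - gradient f μ - (fderiv ℝ (gradient f) μ) (μs - μ) with he2def
  have he1 : ‖e1‖ ≤ L * ‖μp - μ‖ * ‖μp - μ‖ :=
    quad_bound' (gradient g) L hL.le μs r hr hdg hLg hμ hμp
  have he2 : ‖e2‖ ≤ L * ‖μs - μ‖ * ‖μs - μ‖ :=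
    quad_bound' (gradient f) L hL.le μs r hr hdf hLf hμ hμs
  -- key identity
  have hAgu : (Ag : EuclideanSpace ℝ (Fin d) →L[ℝ] EuclideanSpace ℝ (Fin d)) (μp - μ) =
      (Af : EuclideanSpace ℝ (Fin d) →L[ℝ] EuclideanSpace ℝ (Fin d)) (μs - μ) + (e2 - e1) := by
    rw [hAf, hAg, he1def, he2def, hgfs, hggp, hgg]
    abel
  have key : μp - μs = Ag.symm (((Af : EuclideanSpace ℝ (Fin d) →L[ℝ] EuclideanSpace ℝ (Fin d)) - (Ag : EuclideanSpace ℝ (Fin d) →L[ℝ] EuclideanSpace ℝ (Fin d))) (μs - μ) + (e2 - e1)) := by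
    have h1 : μp - μ = Ag.symm ((Af : EuclideanSpace ℝ (Fin d) →L[ℝ] EuclideanSpace ℝ (Fin d)) (μs - μ) + (e2 - e1)) := by
      rw [← hAgu]
      simp [ContinuousLinearEquiv.coe_coe]
    have h2 : μs - μ = Ag.symm ((Ag : EuclideanSpace ℝ (Fin d) →L[ℝ] EuclideanSpace ℝ (Fin d)) (μs - μ)) := by
      simp [ContinuousLinearEquiv.coe_coe]
    have h3 : μp - μs = (μp - μ) - (μs - μ) := by abel
    rw [h3, h1]
    nth_rewrite 2 [h2]
    rw [← map_sub]
    congr 1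
    simp only [ContinuousLinearMap.sub_apply]
    abel
  -- norm bounds
  have hbound : ‖μp - μs‖ ≤ K * (‖(Af : EuclideanSpace ℝ (Fin d) →L[ℝ] EuclideanSpace ℝ (Fin d)) - (Ag : EuclideanSpace ℝ (Fin d) →L[ℝ] EuclideanSpace ℝ (Fin d))‖ * ‖μs - μ‖
      + (‖e2‖ + ‖e1‖)) := by
    rw [key]
    have h4 : ∀ v : EuclideanSpace ℝ (Fin d), ‖Ag.symm v‖ ≤ K * ‖v‖ := fun v =>
      le_trans ((Ag.symm : EuclideanSpace ℝ (Fin d) →L[ℝ] EuclideanSpace ℝ (Fin d)).le_opNorm v)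
        (mul_le_mul_of_nonneg_right hKg (norm_nonneg v))
    refine le_trans (h4 _) (mul_le_mul_of_nonneg_left ?_ hK.le)
    refine le_trans (norm_add_le _ _) (add_le_add ?_ (norm_sub_le _ _))
    exact ((Af : EuclideanSpace ℝ (Fin d) →L[ℝ] EuclideanSpace ℝ (Fin d)) - (Ag : EuclideanSpace ℝ (Fin d) →L[ℝ] EuclideanSpace ℝ (Fin d))).le_opNorm _
  have hAfg : ‖(Af : EuclideanSpace ℝ (Fin d) →L[ℝ] EuclideanSpace ℝ (Fin d)) - (Ag : EuclideanSpace ℝ (Fin d) →L[ℝ] EuclideanSpace ℝ (Fin d))‖ ≤ ζ * ‖μ - μm‖ := by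
    rw [hAf, hAg]; exact hζμ
  -- scalar bookkeeping
  set a := ‖μ - μs‖ with hadef
  set b := ‖μm - μs‖ with hbdef
  set x := ‖μp - μs‖ with hxdef
  set m := max a b with hmdef
  have hva : ‖μs - μ‖ = a := norm_sub_rev μs μ
  have hab : ‖μ - μm‖ ≤ a + b := by
    calc ‖μ - μm‖ = ‖(μ - μs) + (μs - μm)‖ := by congr 1; abel
      _ ≤ ‖μ - μs‖ + ‖μs - μm‖ := norm_add_le _ _
      _ = a + b := by rw [norm_sub_rev μs μm]
  have hpa : ‖μp - μ‖ ≤ x + a := by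
    calc ‖μp - μ‖ = ‖(μp - μs) + (μs - μ)‖ := by congr 1; abel
      _ ≤ ‖μp - μs‖ + ‖μs - μ‖ := norm_add_le _ _
      _ = x + a := by rw [hva]
  have hxr : x ≤ r := by rw [hxdef, ← dist_eq_norm]; exact mem_closedBall.mp hμp
  have har : a ≤ r := by rw [hadef, ← dist_eq_norm]; exact mem_closedBall.mp hμ
  have ham : a ≤ m := le_max_left a b
  have hbm : b ≤ m := le_max_right a b
  have ha0 : 0 ≤ a := norm_nonneg _
  have hb0 : 0 ≤ b := norm_nonneg _
  have hx0 : 0 ≤ x := norm_nonneg _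
  have hm0 : 0 ≤ m := le_trans ha0 ham
  have hp0 : 0 ≤ ‖μp - μ‖ := norm_nonneg _
  have hμm0 : 0 ≤ ‖μ - μm‖ := norm_nonneg _
  have hr8 : 8 * K * L * r = 1 := by
    rw [hrdef]; field_simp
  rw [hva] at hbound
  have hmain : x ≤ K * (ζ * (a + b) * a + (L * a * a + L * (x + a) * (x + a))) := by
    refine le_trans hbound ?_
    have t1 : ‖(Af : EuclideanSpace ℝ (Fin d) →L[ℝ] EuclideanSpace ℝ (Fin d)) - (Ag : EuclideanSpace ℝ (Fin d) →L[ℝ] EuclideanSpace ℝ (Fin d))‖ * a ≤ ζ * (a + b) * a := by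
      refine mul_le_mul_of_nonneg_right (le_trans hAfg ?_) ha0
      exact mul_le_mul_of_nonneg_left hab hζ.le
    have t2 : ‖e1‖ ≤ L * (x + a) * (x + a) := by
      refine le_trans he1 ?_
      nlinarith [mul_le_mul_of_nonneg_left (mul_self_le_mul_self hp0 hpa) hL.le]
    have t3 : ‖e2‖ ≤ L * a * a := by rw [hva] at he2; exact he2
    nlinarith
  clear hf hg hΓf hΓg hLf hLg hdf hdg he1 he2 hAgu key hbound hAfg hμm hμ hμp hgfs hgg hggp
  clear hAf hAg hKf hKg hζμ hva hab hpa hμs he1def he2def hp0 hμm0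
  clear_value a b x m r
  clear hadef hbdef hxdef hmdef hrdef
  clear e1 e2 Af Ag f g μs μm μ μp
  have s1 : K * (ζ * (a + b) * a) ≤ 2 * (K * ζ) * (a * m) := by
    nlinarith [mul_nonneg (mul_nonneg hK.le (mul_nonneg hζ.le ha0))
      (by linarith : (0:ℝ) ≤ 2 * m - (a + b))]
  have s2 : K * (L * a * a) ≤ (K * L) * (a * m) := by
    nlinarith [mul_nonneg (mul_nonneg hK.le (mul_nonneg hL.le ha0)) (sub_nonneg.mpr ham)]
  have s3 : K * (L * (x + a) * (x + a)) ≤ 2 * (K * L) * (x * x) + 2 * (K * L) * (a * m) := by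
    nlinarith [mul_nonneg (mul_nonneg hK.le hL.le) (sq_nonneg (x - a)),
      mul_nonneg (mul_nonneg hK.le (mul_nonneg hL.le ha0)) (sub_nonneg.mpr ham)]
  have hx8 : 8 * K * L * r * x = x := by rw [hr8, one_mul]
  have s4 : 2 * (K * L) * (x * x) ≤ x / 4 := by
    nlinarith [mul_nonneg (mul_nonneg (mul_nonneg hK.le hL.le) hx0) (sub_nonneg.mpr hxr), hx8]
  nlinarith [s1, s2, s3, s4, hmain,
    mul_nonneg (mul_pos hK hζ).le (mul_nonneg ha0 hm0),
    mul_nonneg (mul_pos hK hL).le (mul_nonneg ha0 hm0)]
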